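/- In the Laurent polynomial ring L', the ideal generated by the quadrics q_{ijkl} for all 1 ≤ i < j < k < l ≤ n equals the ideal generated by the linear elements z_{kl} − z_{2l} + z_{2k} for 3 ≤ k < l ≤ n, where z_{23} denotes 1. -/

import Mathlib

/-! Statement 12.  Labels `1, …, n` are the nonzero elements of `Fin (n+1)`.
`L' = K[z_{ij}^{±1} : (i,j) ∈ ℰ]` is realized as the monoid algebra of `ℤ^ℰ` over the
field `K`. -/

/-- Pairs `(i,j)` with `2 ≤ i < j ≤ n` and `(i,j) ≠ (2,3)`. -/
abbrev EIdx (n : ℕ) :=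
  {q : Fin (n + 1) × Fin (n + 1) //
    1 < q.1 ∧ q.1 < q.2 ∧ q ≠ ((2 : Fin (n + 1)), (3 : Fin (n + 1)))}

/-- The Laurent monomial `z̃_{ab}` in `L' = K[ℤ^ℰ]`: it is `z_{ab}` when
`(a,b) ∈ ℰ` and `1` otherwise (in particular `z̃_{23} = 1`). -/
noncomputable def Zt (n : ℕ) (K : Type*) [Field K] (a b : Fin (n + 1)) :
    AddMonoidAlgebra K (EIdx n → ℤ) :=
  if h : 1 < a ∧ a < b ∧ (a, b) ≠ ((2 : Fin (n + 1)), (3 : Fin (n + 1))) then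
    AddMonoidAlgebra.single (Pi.single (⟨(a, b), h⟩ : EIdx n) 1) 1
  else 1

/-- The quadric `q_{ijkl} = z̃_{ij}z̃_{kl} - z̃_{ik}z̃_{jl} + z̃_{il}z̃_{jk} ∈ L'`. -/
noncomputable def qpoly (n : ℕ) (K : Type*) [Field K] (i j k l : Fin (n + 1)) :
    AddMonoidAlgebra K (EIdx n → ℤ) :=
  Zt n K i j * Zt n K k l - Zt n K i k * Zt n K j l + Zt n K i l * Zt n K j k

/-- `z̃_{ab} = 1` when `a` is not above `1`. -/
lemma Zt_eq_one {n : ℕ} {K : Type*} [Field K] {a : Fin (n + 1)} (b : Fin (n + 1))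
    (h : ¬ (1 : Fin (n + 1)) < a) : Zt n K a b = 1 := by
  rw [Zt, dif_neg]
  exact fun h' => h h'.1

/-- In the Laurent polynomial ring `L'`, the ideal generated by the
quadrics `q_{ijkl}` for all labels `1 ≤ i < j < k < l ≤ n` equals the ideal generated
by the linear elements `z_{kl} - z_{2l} + z_{2k}` for `3 ≤ k < l ≤ n`, with `z_{23}`
denoting `1`. -/
theorem qpoly_ideal_eq_linear_ideal (n : ℕ) (hn : 4 ≤ n) (K : Type*) [Field K] :
    Ideal.span {f : AddMonoidAlgebra K (EIdx n → ℤ) |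
        ∃ i j k l : Fin (n + 1), 0 < i ∧ i < j ∧ j < k ∧ k < l ∧
          f = qpoly n K i j k l} =
      Ideal.span {f : AddMonoidAlgebra K (EIdx n → ℤ) |
        ∃ a b : Fin (n + 1), (2 : Fin (n + 1)) < a ∧ a < b ∧
          f = Zt n K a b - Zt n K 2 b + Zt n K 2 a} := by
  have v1 : ((1 : Fin (n + 1)) : ℕ) = 1 := by
    show 1 % (n + 1) = 1
    exact Nat.mod_eq_of_lt (by omega)
  have v2 : ((2 : Fin (n + 1)) : ℕ) = 2 := by
    show 2 % (n + 1) = 2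
    exact Nat.mod_eq_of_lt (by omega)
  have h11 : ¬ (1 : Fin (n + 1)) < 1 := lt_irrefl _
  set I2 : Ideal (AddMonoidAlgebra K (EIdx n → ℤ)) :=
      Ideal.span {f : AddMonoidAlgebra K (EIdx n → ℤ) |
        ∃ a b : Fin (n + 1), (2 : Fin (n + 1)) < a ∧ a < b ∧
          f = Zt n K a b - Zt n K 2 b + Zt n K 2 a} with hI2
  apply le_antisymm
  · rw [Ideal.span_le]
    rintro f ⟨i, j, k, l, hi, hij, hjk, hkl, rfl⟩
    set W : Fin (n + 1) → AddMonoidAlgebra K (EIdx n → ℤ) :=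
      fun x => if x = 2 then 0 else Zt n K 2 x with hW
    have key : ∀ a b : Fin (n + 1), (1 : Fin (n + 1)) < a → a < b →
        Zt n K a b - W b + W a ∈ I2 := by
      intro a b ha hab
      have hb2 : b ≠ 2 := by
        intro hb
        rw [Fin.lt_def] at ha hab
        rw [hb, v2] at hab
        rw [v1] at ha
        omega
      by_cases ha2 : a = 2
      · subst ha2
        have : Zt n K 2 b - W b + W 2 = 0 := by
          simp [hW, hb2]
        rw [this]
        exact zero_mem I2
      · have ha2' : (2 : Fin (n + 1)) < a := by
          rw [Fin.lt_def] at ha ⊢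
          rw [v1] at ha
          rw [v2]
          have : (a : ℕ) ≠ 2 := fun hv => ha2 (Fin.ext (by rw [hv, v2]))
          omega
        have : Zt n K a b - W b + W a = Zt n K a b - Zt n K 2 b + Zt n K 2 a := by
          simp [hW, hb2, ha2]
        rw [this]
        exact Ideal.subset_span ⟨a, b, ha2', hab, rfl⟩
    by_cases h1 : (1 : Fin (n + 1)) < i
    · have e1 := key i j h1 hij
      have e2 := key i k h1 (hij.trans hjk)
      have e3 := key i l h1 (hij.trans (hjk.trans hkl))
      have e4 := key j k (h1.trans hij) hjk
      have e5 := key j l (h1.trans hij) (hjk.trans hkl)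
      have e6 := key k l (h1.trans (hij.trans hjk)) hkl
      have hq : qpoly n K i j k l =
          (Zt n K i j * (Zt n K k l - W l + W k)
            + (W l - W k) * (Zt n K i j - W j + W i))
          - (Zt n K i k * (Zt n K j l - W l + W j)
            + (W l - W j) * (Zt n K i k - W k + W i))
          + (Zt n K i l * (Zt n K j k - W k + W j)
            + (W k - W j) * (Zt n K i l - W l + W i)) := by
        rw [qpoly]; ring
      rw [hq]
      exact add_mem
        (sub_mem
          (add_mem (Ideal.mul_mem_left _ _ e6) (Ideal.mul_mem_left _ _ e1))
          (add_mem (Ideal.mul_mem_left _ _ e5) (Ideal.mul_mem_left _ _ e2)))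
        (add_mem (Ideal.mul_mem_left _ _ e4) (Ideal.mul_mem_left _ _ e3))
    · have h1j : (1 : Fin (n + 1)) < j := by
        rw [Fin.lt_def] at hi hij ⊢
        rw [v1]
        omega
      have e4 := key j k h1j hjk
      have e5 := key j l h1j (hjk.trans hkl)
      have e6 := key k l (h1j.trans hjk) hkl
      have hq : qpoly n K i j k l =
          (Zt n K k l - W l + W k) - (Zt n K j l - W l + W j)
            + (Zt n K j k - W k + W j) := by
        rw [qpoly, Zt_eq_one j h1, Zt_eq_one k h1, Zt_eq_one l h1]
        ring
      rw [hq]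
      exact add_mem (sub_mem e6 e5) e4
  · rw [Ideal.span_le]
    rintro f ⟨a, b, ha, hab, rfl⟩
    apply Ideal.subset_span
    refine ⟨1, 2, a, b, ?_, ?_, ?_, hab, ?_⟩
    · rw [Fin.lt_def, v1]
      show 0 < 1
      omega
    · rw [Fin.lt_def, v1, v2]; omega
    · exact ha
    · rw [qpoly, Zt_eq_one 2 h11, Zt_eq_one a h11, Zt_eq_one b h11]
      ring
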